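/- arXiv:math/0412561 — 4 statements merged into one kernel-verified Lean document; each statement's English description precedes it below -/
import Mathlib

section
/- Let R be a commutative ring, A and B R-algebras with an R-algebra morphism β : A → B, T an A-ring and S a B-ring with a morphism of A-rings ξ : S → T. Let K be a right T-module and L a right S-module. If the induced right S-module K ⊗_A B is L-subgenerated, then for every K-subgenerated right T-module M the induced right S-module M ⊗_A B is L-subgenerated; hence the induction functor − ⊗_A B : M_T → M_S restricts to a functor σ[K_T] → σ[L_S]. -/
open MulOpposite

/-! ## A tensor product of a right module and a left module over a
(possibly noncommutative) ring `A`. -/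

namespace NCT

variable (A : Type*) [Ring A]
variable (M : Type*) [AddCommGroup M] [Module Aᵐᵒᵖ M]
variable (N : Type*) [AddCommGroup N] [Module A N]

/-- The subgroup of relations defining `M ⊗_A N`. -/
noncomputable def rel : AddSubgroup (TensorProduct ℤ M N) :=
  AddSubgroup.closure
    {z | ∃ (a : A) (m : M) (n : N), z = (op a • m) ⊗ₜ[ℤ] n - m ⊗ₜ[ℤ] (a • n)}

/-- The tensor product `M ⊗_A N` of a right `A`-module `M` and a left `A`-module `N`
over a possibly noncommutative ring `A`. -/
abbrev T := TensorProduct ℤ M N ⧸ rel A M N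

/-- The canonical map `M × N → M ⊗_A N`. -/
noncomputable def tmul (m : M) (n : N) : T A M N := QuotientAddGroup.mk (m ⊗ₜ[ℤ] n)

variable {A M N}

lemma add_tmul (m m' : M) (n : N) :
    tmul A M N (m + m') n = tmul A M N m n + tmul A M N m' n := by
  show QuotientAddGroup.mk _ = _
  rw [TensorProduct.add_tmul, QuotientAddGroup.mk_add]; rfl

lemma tmul_add (m : M) (n n' : N) :
    tmul A M N m (n + n') = tmul A M N m n + tmul A M N m n' := by
  show QuotientAddGroup.mk _ = _
  rw [TensorProduct.tmul_add, QuotientAddGroup.mk_add]; rfl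

lemma zero_tmul (n : N) : tmul A M N 0 n = 0 := by
  show QuotientAddGroup.mk _ = _
  rw [TensorProduct.zero_tmul]; rfl

lemma tmul_zero (m : M) : tmul A M N m 0 = 0 := by
  show QuotientAddGroup.mk _ = _
  rw [TensorProduct.tmul_zero]; rfl

/-- The balancedness relation `(m · a) ⊗ n = m ⊗ (a · n)`. -/
lemma balanced (a : A) (m : M) (n : N) :
    tmul A M N (op a • m) n = tmul A M N m (a • n) := by
  apply QuotientAddGroup.eq.mpr
  have h : (op a • m) ⊗ₜ[ℤ] n - m ⊗ₜ[ℤ] (a • n) ∈ rel A M N :=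
    AddSubgroup.subset_closure ⟨a, m, n, rfl⟩
  have := (rel A M N).neg_mem h
  rw [neg_sub] at this
  rw [neg_add_eq_sub]
  exact this

@[elab_as_elim] lemma induction_on {p : T A M N → Prop} (z : T A M N)
    (zero : p 0) (tm : ∀ m n, p (tmul A M N m n))
    (add : ∀ x y, p x → p y → p (x + y)) : p z := by
  obtain ⟨x, rfl⟩ := QuotientAddGroup.mk_surjective z
  induction x using TensorProduct.induction_on with
  | zero => exact zero
  | tmul m n => exact tm m n
  | add x y hx hy => rw [QuotientAddGroup.mk_add]; exact add _ _ hx hy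

/-- Lift a biadditive `A`-balanced map to the tensor product. -/
noncomputable def lift₂ {P : Type*} [AddCommGroup P] (f : M → N → P)
    (h₁ : ∀ m m' n, f (m + m') n = f m n + f m' n)
    (h₂ : ∀ m n n', f m (n + n') = f m n + f m n')
    (hb : ∀ (a : A) m n, f (op a • m) n = f m (a • n)) : T A M N →+ P := by
  refine QuotientAddGroup.lift _ (TensorProduct.liftAddHom
    (AddMonoidHom.mk' (fun m => AddMonoidHom.mk' (f m) (h₂ m))
      (fun m m' => by ext n; exact h₁ m m' n)) ?_) ?_
  · intro r m n
    show f (r • m) n = f m (r • n)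
    set F : M →+ (N →+ P) := AddMonoidHom.mk' (fun m => AddMonoidHom.mk' (f m) (h₂ m))
      (fun m m' => by ext n; exact h₁ m m' n) with hF
    calc f (r • m) n = (F (r • m)) n := rfl
      _ = (r • F m) n := by rw [AddMonoidHom.map_zsmul]
      _ = r • f m n := rfl
      _ = f m (r • n) := (AddMonoidHom.map_zsmul (AddMonoidHom.mk' (f m) (h₂ m)) _ _).symm
  · refine (AddSubgroup.closure_le _).2 ?_
    rintro x ⟨a, m, n, rfl⟩
    simp only [SetLike.mem_coe, AddMonoidHom.mem_ker, map_sub,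
      TensorProduct.liftAddHom_tmul]
    show f (op a • m) n - f m (a • n) = 0
    rw [hb, sub_self]

@[simp] lemma lift₂_tmul {P : Type*} [AddCommGroup P] (f : M → N → P)
    (h₁ : ∀ m m' n, f (m + m') n = f m n + f m' n)
    (h₂ : ∀ m n n', f m (n + n') = f m n + f m n')
    (hb : ∀ (a : A) m n, f (op a • m) n = f m (a • n)) (m : M) (n : N) :
    lift₂ f h₁ h₂ hb (tmul A M N m n) = f m n := rfl

lemma hom_ext {P : Type*} [AddCommGroup P] {g h : T A M N →+ P}
    (H : ∀ m n, g (tmul A M N m n) = h (tmul A M N m n)) : g = h := by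
  refine AddMonoidHom.ext fun z => ?_
  refine induction_on z (by simp) H fun x y hx hy => by rw [map_add, map_add, hx, hy]

/-- A left module structure on the tensor product induced from a left action on the first
factor commuting with the right `A`-action. -/
noncomputable instance instLeftModule (S : Type*) [Semiring S] [Module S M]
    [SMulCommClass S Aᵐᵒᵖ M] : Module S (T A M N) where
  smul s z := lift₂ (fun m n => tmul A M N (s • m) n)
    (fun m m' n => by (try dsimp only); rw [smul_add, add_tmul])
    (fun m n n' => by (try dsimp only); rw [tmul_add])
    (fun a m n => by (try dsimp only); rw [smul_comm, balanced]) z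
  one_smul z := by
    show lift₂ _ _ _ _ z = z
    refine induction_on z (by simp) (fun m n => by simp [zero_tmul, tmul_zero]) fun x y hx hy => by
      rw [map_add, hx, hy]
  mul_smul r s z := by
    show lift₂ _ _ _ _ z = lift₂ _ _ _ _ (lift₂ _ _ _ _ z)
    refine induction_on z (by simp) (fun m n => by simp [mul_smul]) fun x y hx hy => by
      simp only [map_add, hx, hy]
  smul_zero s := by show lift₂ _ _ _ _ 0 = 0; simp
  smul_add s x y := by show lift₂ _ _ _ _ (x + y) = _; rw [map_add]; rfl
  add_smul r s z := by
    show lift₂ _ _ _ _ z = lift₂ _ _ _ _ z + lift₂ _ _ _ _ z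
    refine induction_on z (by simp) (fun m n => by simp [add_smul, add_tmul]) fun x y hx hy => by
      simp only [map_add, hx, hy]; abel
  zero_smul z := by
    show lift₂ _ _ _ _ z = 0
    refine induction_on z (by simp) (fun m n => by simp [zero_tmul, tmul_zero]) fun x y hx hy => by
      rw [map_add, hx, hy, add_zero]

lemma smul_tmul' {S : Type*} [Semiring S] [Module S M] [SMulCommClass S Aᵐᵒᵖ M]
    (s : S) (m : M) (n : N) : s • tmul A M N m n = tmul A M N (s • m) n := rfl

/-- A right module structure on the tensor product induced from a right action on the
second factor commuting with the left `A`-action. -/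
noncomputable instance instRightModule (S : Type*) [Semiring S] [Module Sᵐᵒᵖ N]
    [SMulCommClass A Sᵐᵒᵖ N] : Module Sᵐᵒᵖ (T A M N) where
  smul s z := lift₂ (fun m n => tmul A M N m (s • n))
    (fun m m' n => by (try dsimp only); rw [add_tmul])
    (fun m n n' => by (try dsimp only); rw [smul_add, tmul_add])
    (fun a m n => by (try dsimp only); rw [balanced, smul_comm]) z
  one_smul z := by
    show lift₂ _ _ _ _ z = z
    refine induction_on z (by simp) (fun m n => by simp [zero_tmul, tmul_zero]) fun x y hx hy => by
      rw [map_add, hx, hy]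
  mul_smul r s z := by
    show lift₂ _ _ _ _ z = lift₂ _ _ _ _ (lift₂ _ _ _ _ z)
    refine induction_on z (by simp) (fun m n => by simp [mul_smul]) fun x y hx hy => by
      simp only [map_add, hx, hy]
  smul_zero s := by show lift₂ _ _ _ _ 0 = 0; simp
  smul_add s x y := by show lift₂ _ _ _ _ (x + y) = _; rw [map_add]; rfl
  add_smul r s z := by
    show lift₂ _ _ _ _ z = lift₂ _ _ _ _ z + lift₂ _ _ _ _ z
    refine induction_on z (by simp) (fun m n => by simp [add_smul, tmul_add]) fun x y hx hy => by
      simp only [map_add, hx, hy]; abel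
  zero_smul z := by
    show lift₂ _ _ _ _ z = 0
    refine induction_on z (by simp) (fun m n => by simp [zero_tmul, tmul_zero]) fun x y hx hy => by
      rw [map_add, hx, hy, add_zero]

lemma tmul_smul' {S : Type*} [Semiring S] [Module Sᵐᵒᵖ N] [SMulCommClass A Sᵐᵒᵖ N]
    (s : Sᵐᵒᵖ) (m : M) (n : N) : s • tmul A M N m n = tmul A M N m (s • n) := rfl

end NCT

/-- `X` is an `L`-subgenerated right `S`-module: every element of `X` has an annihilator
containing the annihilator of a finite subset of `L`.  (This is the elementwise
characterization of membership in the trace `Sp (σ[L], X)`.) -/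
def IsSubgenBy (S : Type*) [Ring S] (L : Type*) [AddCommGroup L] [Module Sᵐᵒᵖ L]
    (X : Type*) [AddCommGroup X] [Module Sᵐᵒᵖ X] : Prop :=
  ∀ x : X, ∃ W : Finset L, ∀ s : S,
    (∀ w ∈ W, MulOpposite.op s • w = 0) → MulOpposite.op s • x = 0

/-! ## STATEMENT 0 -/

open MulOpposite NCT in
/-- Let `ξ : S → T` be a morphism of `A`-rings (`T` an `A`-ring, `S` a `B`-ring), `K` a
right `T`-module and `L` a right `S`-module.  If the induced right `S`-module `K ⊗_A B`
(with `S`-action `(k ⊗ b) ↼ s = k ξ(s) ⊗ b`) is `L`-subgenerated, then for every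
`K`-subgenerated right `T`-module `M` the induced right `S`-module `M ⊗_A B` is
`L`-subgenerated; hence the induction functor `- ⊗_A B : 𝕄_T → 𝕄_S` restricts to a functor
`σ[K_T] → σ[L_S]`. -/
theorem statement0
    (R : Type*) [CommRing R] (A : Type*) [Ring A] [Algebra R A]
    (B : Type*) [Ring B] [Algebra R B] (β : A →ₐ[R] B)
    (T : Type*) [Ring T] (ηT : A →+* T)
    (S : Type*) [Ring S] (ηS : B →+* S)
    (ξ : S →+* T) (hξ : ∀ a : A, ξ (ηS (β a)) = ηT a)
    (K : Type*) [AddCommGroup K] [Module Tᵐᵒᵖ K]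
    [Module Aᵐᵒᵖ K] (hKA : ∀ (a : A) (k : K), op a • k = op (ηT a) • k)
    (L : Type*) [AddCommGroup L] [Module Sᵐᵒᵖ L]
    [Module A B] (hAB : ∀ (a : A) (b : B), a • b = β a * b)
    [Module Sᵐᵒᵖ (NCT.T A K B)]
    (hactK : ∀ (s : S) (k : K) (b : B),
      op s • NCT.tmul A K B k b = NCT.tmul A K B (op (ξ s) • k) b)
    -- hypothesis: `K ⊗_A B` is `L`-subgenerated
    (hKB : IsSubgenBy S L (NCT.T A K B))
    -- an arbitrary `K`-subgenerated right `T`-module `M`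
    (M : Type*) [AddCommGroup M] [Module Tᵐᵒᵖ M]
    [Module Aᵐᵒᵖ M] (hMA : ∀ (a : A) (m : M), op a • m = op (ηT a) • m)
    [Module Sᵐᵒᵖ (NCT.T A M B)]
    (hactM : ∀ (s : S) (m : M) (b : B),
      op s • NCT.tmul A M B m b = NCT.tmul A M B (op (ξ s) • m) b)
    (hM : IsSubgenBy T K M) :
    IsSubgenBy S L (NCT.T A M B) := by
  classical
  -- `φ : K ⊗_A B → K`, `k ⊗ b ↦ k · ξ(ηS b)`, is a retraction of `k ↦ k ⊗ 1`.
  have h₁ : ∀ (k k' : K) (b : B),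
      (fun (k : K) (b : B) => op (ξ (ηS b)) • k) (k + k') b =
      (fun (k : K) (b : B) => op (ξ (ηS b)) • k) k b +
      (fun (k : K) (b : B) => op (ξ (ηS b)) • k) k' b := fun k k' b => smul_add _ _ _
  have h₂ : ∀ (k : K) (b b' : B),
      (fun (k : K) (b : B) => op (ξ (ηS b)) • k) k (b + b') =
      (fun (k : K) (b : B) => op (ξ (ηS b)) • k) k b +
      (fun (k : K) (b : B) => op (ξ (ηS b)) • k) k b' := by
    intro k b b'
    simp only [map_add, op_add, add_smul]
  have hb : ∀ (a : A) (k : K) (b : B),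
      (fun (k : K) (b : B) => op (ξ (ηS b)) • k) (op a • k) b =
      (fun (k : K) (b : B) => op (ξ (ηS b)) • k) k (a • b) := by
    intro a k b
    simp only
    rw [hKA, hAB, map_mul, map_mul, hξ, smul_smul, op_mul]
  set φ : NCT.T A K B →+ K :=
    NCT.lift₂ (fun (k : K) (b : B) => op (ξ (ηS b)) • k) h₁ h₂ hb with hφdef
  have hφ : ∀ (x : K) (b : B), φ (NCT.tmul A K B x b) = op (ξ (ηS b)) • x := fun x b => rfl
  have hinj : ∀ (k : K) (s : S), op s • NCT.tmul A K B k 1 = 0 → op (ξ s) • k = 0 := by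
    intro k s h0
    rw [hactK] at h0
    have h1 := congrArg φ h0
    rw [hφ, map_zero, map_one, map_one, op_one, one_smul] at h1
    exact h1
  intro z
  induction z using NCT.induction_on with
  | zero => exact ⟨∅, fun s _ => smul_zero _⟩
  | tm m b =>
    obtain ⟨Wm, hWm⟩ := hM m
    choose WL hWL using fun k : K => hKB (NCT.tmul A K B k 1)
    refine ⟨Wm.biUnion WL, fun s hs => ?_⟩
    have hk : ∀ k ∈ Wm, op (ξ s) • k = 0 := by
      intro k hkW
      exact hinj k s (hWL k s fun w hw => hs w (Finset.mem_biUnion.mpr ⟨k, hkW, hw⟩))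
    rw [hactM, hWm (ξ s) hk, NCT.zero_tmul]
  | add x y hx hy =>
    obtain ⟨W1, hW1⟩ := hx
    obtain ⟨W2, hW2⟩ := hy
    refine ⟨W1 ∪ W2, fun s hs => ?_⟩
    rw [smul_add, hW1 s fun w hw => hs w (Finset.mem_union_left _ hw),
      hW2 s fun w hw => hs w (Finset.mem_union_right _ hw), add_zero]
end

section
/- Let R be a commutative ring, A and B R-algebras with an R-algebra morphism β : A → B, T an A-ring and S a B-ring with a morphism of A-rings ξ : S → T. Let K be a right T-module, L a right S-module, and θ : K → L a right A-linear map (L viewed as right A-module via β). If ξ((0_L : θ(k))) ⊆ (0_K : k) for every k ∈ K, where (0_L : θ(k)) ⊆ S and (0_K : k) ⊆ T denote the annihilators of θ(k) and k, then the induced right S-module K ⊗_A B is L-subgenerated. -/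
open MulOpposite

/-! ## STATEMENT 1 -/

open MulOpposite NCT in
/-- Let `R` be a commutative ring, `A` and `B` `R`-algebras with an `R`-algebra morphism
`β : A → B`, `T` an `A`-ring (given by its unit `ηT : A → T`) and `S` a `B`-ring (unit
`ηS : B → S`) with a morphism of `A`-rings `ξ : S → T`.  Let `K` be a right `T`-module and
`L` a right `S`-module, and `θ : K → L` a right `A`-linear map (`L` viewed as a right
`A`-module via `β`).  If `ξ((0_L : θ(k))) ⊆ (0_K : k)` for every `k ∈ K`, then the induced
right `S`-module `K ⊗_A B` (with `S`-action `(k ⊗ b) ↼ s = k ξ(s) ⊗ b`) is `L`-subgenerated. -/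
theorem statement1
    (R : Type*) [CommRing R] (A : Type*) [Ring A] [Algebra R A]
    (B : Type*) [Ring B] [Algebra R B] (β : A →ₐ[R] B)
    (T : Type*) [Ring T] (ηT : A →+* T)
    (S : Type*) [Ring S] (ηS : B →+* S)
    (ξ : S →+* T) (hξ : ∀ a : A, ξ (ηS (β a)) = ηT a)
    -- `K` a right `T`-module, with its restricted right `A`-module structure
    (K : Type*) [AddCommGroup K] [Module Tᵐᵒᵖ K]
    [Module Aᵐᵒᵖ K] (hKA : ∀ (a : A) (k : K), op a • k = op (ηT a) • k)
    -- `L` a right `S`-module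
    (L : Type*) [AddCommGroup L] [Module Sᵐᵒᵖ L]
    -- `B` as a left `A`-module via `β`
    [Module A B] (hAB : ∀ (a : A) (b : B), a • b = β a * b)
    -- `θ : K → L` right `A`-linear
    (θ : K →+ L) (hθ : ∀ (a : A) (k : K), θ (op a • k) = op (ηS (β a)) • θ k)
    -- the right `S`-module structure on `K ⊗_A B`
    [Module Sᵐᵒᵖ (NCT.T A K B)]
    (hact : ∀ (s : S) (k : K) (b : B),
      op s • NCT.tmul A K B k b = NCT.tmul A K B (op (ξ s) • k) b)
    -- `ξ((0_L : θ(k))) ⊆ (0_K : k)` for every `k`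
    (hann : ∀ (k : K) (s : S), op s • θ k = 0 → op (ξ s) • k = 0) :
    IsSubgenBy S L (NCT.T A K B) := by
  intro x
  refine NCT.induction_on x ?_ ?_ ?_
  · exact ⟨∅, fun s _ => smul_zero _⟩
  · intro k b
    refine ⟨{θ k}, fun s hs => ?_⟩
    rw [hact]
    have : op (ξ s) • k = 0 := hann k s (hs _ (Finset.mem_singleton_self _))
    rw [this, NCT.zero_tmul]
  · classical
    rintro x y ⟨W₁, h₁⟩ ⟨W₂, h₂⟩
    refine ⟨W₁ ∪ W₂, fun s hs => ?_⟩
    rw [smul_add, h₁ s fun w hw => hs w (Finset.mem_union_left _ hw),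
      h₂ s fun w hw => hs w (Finset.mem_union_right _ hw), add_zero]
end

section
/- Let R be a commutative ring, A and B R-algebras with an R-algebra morphism β : A → B, T an A-ring and S a B-ring with a morphism of A-rings ξ : S → T. Let K be a right T-module, L a right S-module, and θ : K → L a right A-linear map. If θ is injective and θ(k ↼ ξ(s)) = θ(k) ↼ s for every s ∈ S and k ∈ K, then ξ((0_L : θ(k))) ⊆ (0_K : k) for every k ∈ K, and consequently the induced right S-module K ⊗_A B is L-subgenerated. -/
open MulOpposite

/-! ## STATEMENT 2 -/

open MulOpposite NCT in
/-- Let `ξ : S → T` be a morphism of `A`-rings (`T` an `A`-ring, `S` a `B`-ring), `K` a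
right `T`-module, `L` a right `S`-module and `θ : K → L` a right `A`-linear map.  If `θ` is
injective and `θ(k ↼ ξ(s)) = θ(k) ↼ s` for all `s ∈ S`, `k ∈ K`, then
`ξ((0_L : θ(k))) ⊆ (0_K : k)` for every `k ∈ K`, and consequently the induced right
`S`-module `K ⊗_A B` (with `S`-action `(k ⊗ b) ↼ s = k ξ(s) ⊗ b`) is `L`-subgenerated. -/
theorem statement2
    (R : Type*) [CommRing R] (A : Type*) [Ring A] [Algebra R A]
    (B : Type*) [Ring B] [Algebra R B] (β : A →ₐ[R] B)
    (T : Type*) [Ring T] (ηT : A →+* T)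
    (S : Type*) [Ring S] (ηS : B →+* S)
    (ξ : S →+* T) (hξ : ∀ a : A, ξ (ηS (β a)) = ηT a)
    (K : Type*) [AddCommGroup K] [Module Tᵐᵒᵖ K]
    [Module Aᵐᵒᵖ K] (hKA : ∀ (a : A) (k : K), op a • k = op (ηT a) • k)
    (L : Type*) [AddCommGroup L] [Module Sᵐᵒᵖ L]
    [Module A B] (hAB : ∀ (a : A) (b : B), a • b = β a * b)
    (θ : K →+ L) (hθ : ∀ (a : A) (k : K), θ (op a • k) = op (ηS (β a)) • θ k)
    [Module Sᵐᵒᵖ (NCT.T A K B)]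
    (hact : ∀ (s : S) (k : K) (b : B),
      op s • NCT.tmul A K B k b = NCT.tmul A K B (op (ξ s) • k) b)
    -- `θ` is injective and compatible with the actions
    (hinj : Function.Injective θ)
    (hcomp : ∀ (s : S) (k : K), θ (op (ξ s) • k) = op s • θ k) :
    (∀ (k : K) (s : S), op s • θ k = 0 → op (ξ s) • k = 0) ∧
      IsSubgenBy S L (NCT.T A K B) := by
  have h1 : ∀ (k : K) (s : S), op s • θ k = 0 → op (ξ s) • k = 0 := by
    intro k s h
    apply hinj
    rw [hcomp, h, map_zero]
  refine ⟨h1, ?_⟩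
  intro x
  induction x using NCT.induction_on with
  | zero => exact ⟨∅, fun s _ => smul_zero _⟩
  | tm k b =>
    refine ⟨{θ k}, fun s hs => ?_⟩
    rw [hact, h1 k s (hs _ (Finset.mem_singleton_self _)), NCT.zero_tmul]
  | add x y hx hy =>
    obtain ⟨Wx, hWx⟩ := hx
    obtain ⟨Wy, hWy⟩ := hy
    classical
    refine ⟨Wx ∪ Wy, fun s hs => ?_⟩
    rw [smul_add, hWx s (fun w hw => hs w (Finset.mem_union_left _ hw)),
      hWy s (fun w hw => hs w (Finset.mem_union_right _ hw)), add_zero]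
end

section
/- Let R be a commutative ring, A and B R-algebras with an R-algebra morphism β : A → B, T an A-ring and S a B-ring with a morphism of A-rings ξ : S → T. Let K be a right T-module and L a right S-module, and assume the induced right S-module K ⊗_A B is L-subgenerated. Define the coinduction functor Coind_L^K : σ[L_S] → σ[K_T] by Coind_L^K(N) := Sp(σ[K_T], Hom_{−S}(T ⊗_A B, N)). Then there are isomorphisms Hom_{−S}(M ⊗_A B, N) ≅ Hom_{−T}(M, Coind_L^K(N)), functorial in M ∈ σ[K_T] and N ∈ σ[L_S]; i.e. (− ⊗_A B, Coind_L^K(−)) is an adjoint pair of covariant functors. -/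
open MulOpposite

/-! ## STATEMENT 3 -/

open MulOpposite NCT

section Statement3

variable (R : Type*) [CommRing R] (A : Type*) [Ring A] [Algebra R A]
variable (B : Type*) [Ring B] [Algebra R B] (β : A →ₐ[R] B)
variable (T : Type*) [Ring T] (ηT : A →+* T)
variable (S : Type*) [Ring S] (ηS : B →+* S) (ξ : S →+* T)
variable [Module Aᵐᵒᵖ T] [Module A B]
variable [SMulCommClass T Aᵐᵒᵖ T] [Module Sᵐᵒᵖ (NCT.T A T B)]
variable [SMulCommClass T Sᵐᵒᵖ (NCT.T A T B)]

/-- Left multiplication by `t̃ ∈ T` on `T ⊗_A B`, as a morphism of right `S`-modules;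
this is the right `T`-module structure on `Hom_{-S}(T ⊗_A B, N)`,
`(φ ↼ t̃)(Σ tᵢ ⊗ bᵢ) = φ(Σ t̃ tᵢ ⊗ bᵢ)`. -/
noncomputable def lmulTB (t : T) : NCT.T A T B →ₗ[Sᵐᵒᵖ] NCT.T A T B where
  toFun z := t • z
  map_add' := smul_add t
  map_smul' σ z := by (try dsimp only); rw [RingHom.id_apply, smul_comm]

/-- Membership in the trace `Sp(σ[K_T], Hom_{-S}(T ⊗_A B, N))`:  `φ` is annihilated by the
annihilator of some finite subset of `K`. -/
noncomputable def SpCond (K : Type*) [AddCommGroup K] [Module Tᵐᵒᵖ K]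
    (N : Type*) [AddCommGroup N] [Module Sᵐᵒᵖ N]
    (φ : NCT.T A T B →ₗ[Sᵐᵒᵖ] N) : Prop :=
  ∃ W : Finset K, ∀ t : T, (∀ w ∈ W, op t • w = 0) →
    φ.comp (lmulTB A B T S t) = 0

end Statement3

section MyAux

variable (A : Type*) [Ring A] (B : Type*) [Ring B]
variable (T : Type*) [Ring T] (ηT : A →+* T)
variable (S : Type*) [Ring S] (ξ : S →+* T)
variable [Module Aᵐᵒᵖ T] [Module A B]
variable [SMulCommClass T Aᵐᵒᵖ T] [Module Sᵐᵒᵖ (NCT.T A T B)]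
variable [SMulCommClass T Sᵐᵒᵖ (NCT.T A T B)]

variable {M : Type*} [AddCommGroup M] [Module Tᵐᵒᵖ M] [Module Aᵐᵒᵖ M]
variable [Module Sᵐᵒᵖ (NCT.T A M B)]
variable {N : Type*} [AddCommGroup N] [Module Sᵐᵒᵖ N]

/-- The forward map of the adjunction: `f ↦ (m ↦ (t ⊗ b ↦ f ((op t • m) ⊗ b)))`. -/
noncomputable def gLin
    (hTA : ∀ (a : A) (t : T), op a • t = t * ηT a)
    (hactT : ∀ (s : S) (t : T) (b : B),
      op s • NCT.tmul A T B t b = NCT.tmul A T B (t * ξ s) b)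
    (hMA : ∀ (a : A) (m : M), op a • m = op (ηT a) • m)
    (hactM : ∀ (s : S) (m : M) (b : B),
      op s • NCT.tmul A M B m b = NCT.tmul A M B (op (ξ s) • m) b)
    (f : NCT.T A M B →ₗ[Sᵐᵒᵖ] N) (m : M) : NCT.T A T B →ₗ[Sᵐᵒᵖ] N where
  toFun := NCT.lift₂ (fun t b => f (NCT.tmul A M B (op t • m) b))
    (fun t t' b => by (try dsimp only); rw [op_add, add_smul, NCT.add_tmul, map_add])
    (fun t b b' => by (try dsimp only); rw [NCT.tmul_add, map_add])
    (fun a t b => by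
      (try dsimp only)
      rw [hTA, op_mul, mul_smul, ← hMA, NCT.balanced])
  map_add' := map_add _
  map_smul' σ z := by
    dsimp only [RingHom.id_apply]
    induction z using NCT.induction_on with
    | zero => rw [smul_zero, map_zero, smul_zero]
    | tm t b =>
      rw [← op_unop σ, hactT, NCT.lift₂_tmul, NCT.lift₂_tmul, op_mul, mul_smul,
        ← hactM, map_smul]
    | add x y hx hy => rw [smul_add, map_add, map_add, hx, hy, smul_add]

@[simp] lemma gLin_tmul
    (hTA : ∀ (a : A) (t : T), op a • t = t * ηT a)
    (hactT : ∀ (s : S) (t : T) (b : B),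
      op s • NCT.tmul A T B t b = NCT.tmul A T B (t * ξ s) b)
    (hMA : ∀ (a : A) (m : M), op a • m = op (ηT a) • m)
    (hactM : ∀ (s : S) (m : M) (b : B),
      op s • NCT.tmul A M B m b = NCT.tmul A M B (op (ξ s) • m) b)
    (f : NCT.T A M B →ₗ[Sᵐᵒᵖ] N) (m : M) (t : T) (b : B) :
    gLin A B T ηT S ξ hTA hactT hMA hactM f m (NCT.tmul A T B t b)
      = f (NCT.tmul A M B (op t • m) b) := rfl

/-- The inverse map of the adjunction: `g ↦ (m ⊗ b ↦ g m (1 ⊗ b))`. -/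
noncomputable def fLin
    (hTA : ∀ (a : A) (t : T), op a • t = t * ηT a)
    (hactT : ∀ (s : S) (t : T) (b : B),
      op s • NCT.tmul A T B t b = NCT.tmul A T B (t * ξ s) b)
    (hMA : ∀ (a : A) (m : M), op a • m = op (ηT a) • m)
    (hactM : ∀ (s : S) (m : M) (b : B),
      op s • NCT.tmul A M B m b = NCT.tmul A M B (op (ξ s) • m) b)
    (g : M →+ (NCT.T A T B →ₗ[Sᵐᵒᵖ] N))
    (hg : ∀ (t : T) (m : M) (z : NCT.T A T B), g (op t • m) z = g m (t • z)) :
    NCT.T A M B →ₗ[Sᵐᵒᵖ] N where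
  toFun := NCT.lift₂ (fun m b => g m (NCT.tmul A T B 1 b))
    (fun m m' b => by (try dsimp only); rw [map_add]; rfl)
    (fun m b b' => by (try dsimp only); rw [NCT.tmul_add, map_add])
    (fun a m b => by
      (try dsimp only)
      rw [hMA, hg, NCT.smul_tmul', smul_eq_mul, mul_one, ← NCT.balanced, hTA, one_mul])
  map_add' := map_add _
  map_smul' σ z := by
    dsimp only [RingHom.id_apply]
    induction z using NCT.induction_on with
    | zero => rw [smul_zero, map_zero, smul_zero]
    | tm m b =>
      rw [← op_unop σ, hactM, NCT.lift₂_tmul, NCT.lift₂_tmul, hg, NCT.smul_tmul',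
        smul_eq_mul, mul_one, ← map_smul, hactT, one_mul]
    | add x y hx hy => rw [smul_add, map_add, map_add, hx, hy, smul_add]

@[simp] lemma fLin_tmul
    (hTA : ∀ (a : A) (t : T), op a • t = t * ηT a)
    (hactT : ∀ (s : S) (t : T) (b : B),
      op s • NCT.tmul A T B t b = NCT.tmul A T B (t * ξ s) b)
    (hMA : ∀ (a : A) (m : M), op a • m = op (ηT a) • m)
    (hactM : ∀ (s : S) (m : M) (b : B),
      op s • NCT.tmul A M B m b = NCT.tmul A M B (op (ξ s) • m) b)
    (g : M →+ (NCT.T A T B →ₗ[Sᵐᵒᵖ] N))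
    (hg : ∀ (t : T) (m : M) (z : NCT.T A T B), g (op t • m) z = g m (t • z))
    (m : M) (b : B) :
    fLin A B T ηT S ξ hTA hactT hMA hactM g hg (NCT.tmul A M B m b)
      = g m (NCT.tmul A T B 1 b) := rfl

end MyAux

section Statement3

variable (R : Type*) [CommRing R] (A : Type*) [Ring A] [Algebra R A]
variable (B : Type*) [Ring B] [Algebra R B] (β : A →ₐ[R] B)
variable (T : Type*) [Ring T] (ηT : A →+* T)
variable (S : Type*) [Ring S] (ηS : B →+* S) (ξ : S →+* T)
variable [Module Aᵐᵒᵖ T] [Module A B]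
variable [SMulCommClass T Aᵐᵒᵖ T] [Module Sᵐᵒᵖ (NCT.T A T B)]
variable [SMulCommClass T Sᵐᵒᵖ (NCT.T A T B)]


/-- Let `ξ : S → T` be a morphism of `A`-rings, `K` a right `T`-module, `L` a right
`S`-module, and assume the induced right `S`-module `K ⊗_A B` is `L`-subgenerated.
Define the coinduction functor `Coind_L^K : σ[L_S] → σ[K_T]` by
`Coind_L^K(N) = Sp(σ[K_T], Hom_{-S}(T ⊗_A B, N))`.  Then there are isomorphisms
`Hom_{-S}(M ⊗_A B, N) ≅ Hom_{-T}(M, Coind_L^K(N))`, functorial in `M ∈ σ[K_T]` and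
`N ∈ σ[L_S]` (the isomorphism is the canonical one, `f ↦ (m ↦ (t ⊗ b ↦ f (m t ⊗ b)))`);
i.e. `(- ⊗_A B, Coind_L^K(-))` is an adjoint pair of covariant functors. -/
theorem statement3
    (hξ : ∀ a : A, ξ (ηS (β a)) = ηT a)
    -- the `A`-bimodule structure of the `A`-ring `T` and the `S`-module structure on `T ⊗_A B`
    (hTA : ∀ (a : A) (t : T), op a • t = t * ηT a)
    (hAB : ∀ (a : A) (b : B), a • b = β a * b)
    (hactT : ∀ (s : S) (t : T) (b : B),
      op s • NCT.tmul A T B t b = NCT.tmul A T B (t * ξ s) b)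
    -- `K` a right `T`-module, `L` a right `S`-module
    (K : Type*) [AddCommGroup K] [Module Tᵐᵒᵖ K]
    [Module Aᵐᵒᵖ K] (hKA : ∀ (a : A) (k : K), op a • k = op (ηT a) • k)
    (L : Type*) [AddCommGroup L] [Module Sᵐᵒᵖ L]
    [Module Sᵐᵒᵖ (NCT.T A K B)]
    (hactK : ∀ (s : S) (k : K) (b : B),
      op s • NCT.tmul A K B k b = NCT.tmul A K B (op (ξ s) • k) b)
    -- `K ⊗_A B` is `L`-subgenerated
    (hKB : IsSubgenBy S L (NCT.T A K B))
    -- `M ∈ σ[K_T]`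
    (M : Type*) [AddCommGroup M] [Module Tᵐᵒᵖ M]
    [Module Aᵐᵒᵖ M] (hMA : ∀ (a : A) (m : M), op a • m = op (ηT a) • m)
    [Module Sᵐᵒᵖ (NCT.T A M B)]
    (hactM : ∀ (s : S) (m : M) (b : B),
      op s • NCT.tmul A M B m b = NCT.tmul A M B (op (ξ s) • m) b)
    (hM : IsSubgenBy T K M)
    -- `N ∈ σ[L_S]`
    (N : Type*) [AddCommGroup N] [Module Sᵐᵒᵖ N] (hN : IsSubgenBy S L N) :
    ∃ e : (NCT.T A M B →ₗ[Sᵐᵒᵖ] N) ≃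
      {g : M →+ (NCT.T A T B →ₗ[Sᵐᵒᵖ] N) //
        (∀ (t : T) (m : M), g (op t • m) = (g m).comp (lmulTB A B T S t)) ∧
        (∀ m : M, SpCond A B T S K N (g m))},
      ∀ (f : NCT.T A M B →ₗ[Sᵐᵒᵖ] N) (m : M) (t : T) (b : B),
        ((e f).1 m) (NCT.tmul A T B t b) = f (NCT.tmul A M B (op t • m) b) := by
  have hcomp : ∀ (f : NCT.T A M B →ₗ[Sᵐᵒᵖ] N) (t : T) (m : M),
      gLin A B T ηT S ξ hTA hactT hMA hactM f (op t • m)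
        = (gLin A B T ηT S ξ hTA hactT hMA hactM f m).comp (lmulTB A B T S t) := by
    intro f t m
    apply LinearMap.ext; intro z
    induction z using NCT.induction_on with
    | zero => simp only [map_zero]
    | tm t' b =>
      show f (NCT.tmul A M B (op t' • op t • m) b)
        = gLin A B T ηT S ξ hTA hactT hMA hactM f m (t • NCT.tmul A T B t' b)
      rw [NCT.smul_tmul', smul_eq_mul, gLin_tmul, ← mul_smul, ← op_mul]
    | add x y hx hy => simp only [map_add, hx, hy]
  have hzero : ∀ (f : NCT.T A M B →ₗ[Sᵐᵒᵖ] N),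
      gLin A B T ηT S ξ hTA hactT hMA hactM f (0 : M) = 0 := by
    intro f
    apply LinearMap.ext; intro z
    induction z using NCT.induction_on with
    | zero => simp only [map_zero]
    | tm t b =>
      show f (NCT.tmul A M B (op t • (0 : M)) b) = 0
      rw [smul_zero, NCT.zero_tmul, map_zero]
    | add x y hx hy => simp only [map_add, hx, hy, LinearMap.zero_apply, add_zero]
  have hadd : ∀ (f : NCT.T A M B →ₗ[Sᵐᵒᵖ] N) (m m' : M),
      gLin A B T ηT S ξ hTA hactT hMA hactM f (m + m')
        = gLin A B T ηT S ξ hTA hactT hMA hactM f m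
          + gLin A B T ηT S ξ hTA hactT hMA hactM f m' := by
    intro f m m'
    apply LinearMap.ext; intro z
    induction z using NCT.induction_on with
    | zero => simp only [map_zero, add_zero]
    | tm t b =>
      show f (NCT.tmul A M B (op t • (m + m')) b)
        = f (NCT.tmul A M B (op t • m) b) + f (NCT.tmul A M B (op t • m') b)
      rw [smul_add, NCT.add_tmul, map_add]
    | add x y hx hy =>
      simp only [map_add, hx, hy, LinearMap.add_apply]
  refine ⟨{
    toFun := fun f => ⟨AddMonoidHom.mk'
        (fun m => gLin A B T ηT S ξ hTA hactT hMA hactM f m) (hadd f),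
      fun t m => hcomp f t m,
      fun m => by
        obtain ⟨W, hW⟩ := hM m
        exact ⟨W, fun t ht => by
          show (gLin A B T ηT S ξ hTA hactT hMA hactM f m).comp (lmulTB A B T S t)
            = (0 : NCT.T A T B →ₗ[Sᵐᵒᵖ] N)
          rw [← hcomp f t m, hW t ht, hzero]⟩⟩,
    invFun := fun g => fLin A B T ηT S ξ hTA hactT hMA hactM g.1
      (fun t m z => by rw [g.2.1 t m]; rfl),
    left_inv := fun f => by
      apply LinearMap.ext; intro z
      induction z using NCT.induction_on with
      | zero => simp only [map_zero]
      | tm m b =>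
        show f (NCT.tmul A M B (op (1 : T) • m) b) = f (NCT.tmul A M B m b)
        rw [op_one, one_smul]
      | add x y hx hy => simp only [map_add, hx, hy]
    right_inv := fun g => by
      apply Subtype.ext
      apply AddMonoidHom.ext; intro m
      apply LinearMap.ext; intro z
      induction z using NCT.induction_on with
      | zero => simp only [map_zero]
      | tm t b =>
        show g.1 (op t • m) (NCT.tmul A T B 1 b) = g.1 m (NCT.tmul A T B t b)
        rw [g.2.1 t m]
        show g.1 m (t • NCT.tmul A T B 1 b) = g.1 m (NCT.tmul A T B t b)
        rw [NCT.smul_tmul', smul_eq_mul, mul_one]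
      | add x y hx hy => simp only [map_add, hx, hy] },
    fun f m t b => rfl⟩

end Statement3
end
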